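/- Let Φ ∈ ℝ^{N×r} with rows φ_1,…,φ_N of unit norm, and define the state sequence S_0 = 0, S_t = S_{t−1}(I − φ_t φ_tᵀ) + v_t φ_tᵀ. Then the outputs o_t = S_t ψ_t (for arbitrary query features ψ_t) satisfy the parallel form O = (M ∘ ΨΦᵀ)(I + stril(ΦΦᵀ))⁻¹ V, where stril denotes the strictly lower triangular part and M the causal mask. -/

import Mathlib

open Matrix BigOperators

private lemma vecMulVec_mul_vecMulVec {d r : ℕ} (a : Fin d → ℝ) (b c : Fin r → ℝ)
    (e : Fin r → ℝ) :
    Matrix.vecMulVec a b * Matrix.vecMulVec c e = (b ⬝ᵥ c) • Matrix.vecMulVec a e := by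
  ext i j
  simp [Matrix.mul_apply, Matrix.vecMulVec_apply, dotProduct, Finset.mul_sum, Finset.sum_mul]
  congr 1; ext k; ring

/-- Parallel form of the delta-rule recurrence: with unit-norm key features
`φ_t` (rows of `Φ`), state `S_0 = 0`, `S_t = S_{t−1}(I − φ_t φ_tᵀ) + v_t φ_tᵀ`,
and outputs `o_t = S_t ψ_t`, the output matrix satisfies
`O = (M ∘ ΨΦᵀ)(I + stril(ΦΦᵀ))⁻¹ V`. -/
theorem delta_rule_parallel_form {N r d : ℕ}
    (Φ Ψ : Matrix (Fin N) (Fin r) ℝ) (V : Matrix (Fin N) (Fin d) ℝ)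
    (hΦ : ∀ t : Fin N, Φ t ⬝ᵥ Φ t = 1)
    (S : ℕ → Matrix (Fin d) (Fin r) ℝ)
    (hS0 : S 0 = 0)
    (hS : ∀ t : Fin N,
      S ((t : ℕ) + 1) =
        S (t : ℕ) * (1 - Matrix.vecMulVec (Φ t) (Φ t)) + Matrix.vecMulVec (V t) (Φ t))
    (O : Matrix (Fin N) (Fin d) ℝ)
    (hO : ∀ t : Fin N, O t = S ((t : ℕ) + 1) *ᵥ Ψ t) :
    O = (Matrix.of fun i j : Fin N => if j ≤ i then (Ψ * Φᵀ) i j else 0) *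
        (1 + Matrix.of fun i j : Fin N => if j < i then (Φ * Φᵀ) i j else 0)⁻¹ * V := by
  set T : Matrix (Fin N) (Fin N) ℝ :=
    1 + Matrix.of fun i j : Fin N => if j < i then (Φ * Φᵀ) i j else 0 with hT
  -- T is lower triangular with 1's on diagonal
  have hTlt : T.BlockTriangular OrderDual.toDual := by
    intro i j hij
    have h : i < j := hij
    simp only [hT, Matrix.add_apply, Matrix.of_apply, Matrix.one_apply]
    rw [if_neg (ne_of_lt h), if_neg (asymm h), add_zero]
  have hTdiag : ∀ i, T i i = 1 := by
    intro i; simp [hT, Matrix.one_apply]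
  have hdet : T.det = 1 := by
    rw [Matrix.det_of_lowerTriangular T hTlt]
    simp [hTdiag]
  have hInv : IsUnit T.det := by rw [hdet]; exact isUnit_one
  have hTT : T * T⁻¹ = 1 := Matrix.mul_nonsing_inv T hInv
  set W : Matrix (Fin N) (Fin d) ℝ := T⁻¹ * V with hW
  have hTW : T * W = V := by rw [hW, ← Matrix.mul_assoc, hTT, Matrix.one_mul]
  -- the key row relation: V t = W t + Σ_{s<t} (Φ t ⬝ Φ s) • W s
  have hrow : ∀ t : Fin N, V t = W t + ∑ s ∈ Finset.univ.filter (fun s => s < t),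
      (Φ t ⬝ᵥ Φ s) • W s := by
    intro t
    funext j
    have hVtj := congrFun (congrFun hTW.symm t) j
    simp only [Pi.add_apply, Finset.sum_apply, Pi.smul_apply, smul_eq_mul]
    rw [hVtj, Matrix.mul_apply,
      ← Finset.add_sum_erase _ _ (Finset.mem_univ t), hTdiag, one_mul]
    congr 1
    have hsub : Finset.univ.filter (fun s : Fin N => s < t) ⊆ Finset.univ.erase t := by
      intro s hs
      simp only [Finset.mem_filter, Finset.mem_univ, true_and] at hs
      exact Finset.mem_erase.mpr ⟨ne_of_lt hs, Finset.mem_univ s⟩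
    have hzero : ∀ s ∈ Finset.univ.erase t,
        s ∉ Finset.univ.filter (fun s : Fin N => s < t) → T t s * W s j = 0 := by
      intro s hs hns
      simp only [Finset.mem_erase, Finset.mem_univ, and_true] at hs
      simp only [Finset.mem_filter, Finset.mem_univ, true_and] at hns
      have hts : t < s := lt_of_le_of_ne (not_lt.mp hns) (Ne.symm hs)
      have : T t s = 0 := hTlt (show OrderDual.toDual s < OrderDual.toDual t from hts)
      rw [this, zero_mul]
    rw [← Finset.sum_subset hsub hzero]
    apply Finset.sum_congr rfl
    intro s hs
    simp only [Finset.mem_filter, Finset.mem_univ, true_and] at hs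
    simp only [hT, Matrix.add_apply, Matrix.of_apply, Matrix.one_apply,
      if_neg (ne_of_lt hs).symm, if_pos hs, zero_add, Matrix.mul_apply,
      Matrix.transpose_apply, dotProduct]
  -- induction: S n = Σ_{s : s.val < n} vecMulVec (W s) (Φ s)
  have hSn : ∀ n : ℕ, n ≤ N →
      S n = ∑ s ∈ Finset.univ.filter (fun s : Fin N => (s : ℕ) < n),
        Matrix.vecMulVec (W s) (Φ s) := by
    intro n
    induction n with
    | zero => intro _; simpa using hS0
    | succ n ih =>
      intro hn
      have hnN : n < N := hn
      set t : Fin N := ⟨n, hnN⟩ with ht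
      have ih' := ih (le_of_lt hnN)
      have hsplit : (Finset.univ.filter (fun s : Fin N => (s : ℕ) < n + 1)) =
          insert t (Finset.univ.filter (fun s : Fin N => (s : ℕ) < n)) := by
        ext s
        simp only [Finset.mem_filter, Finset.mem_univ, true_and, Finset.mem_insert]
        constructor
        · intro h
          rcases Nat.lt_succ_iff_lt_or_eq.mp h with h | h
          · exact Or.inr h
          · exact Or.inl (Fin.ext h)
        · rintro (rfl | h)
          · exact Nat.lt_succ_self n
          · exact Nat.lt_succ_of_lt h
      have hrec : S (n + 1) = S n * (1 - Matrix.vecMulVec (Φ t) (Φ t)) +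
          Matrix.vecMulVec (V t) (Φ t) := hS t
      rw [hsplit, Finset.sum_insert (by simp [ht]), hrec, ih']
      rw [Matrix.sum_mul]
      have hterm : ∀ s : Fin N,
          Matrix.vecMulVec (W s) (Φ s) * (1 - Matrix.vecMulVec (Φ t) (Φ t)) =
          Matrix.vecMulVec (W s) (Φ s) - (Φ s ⬝ᵥ Φ t) • Matrix.vecMulVec (W s) (Φ t) := by
        intro s
        rw [Matrix.mul_sub, Matrix.mul_one, _root_.vecMulVec_mul_vecMulVec]
      have hVt : Matrix.vecMulVec (V t) (Φ t) =
          Matrix.vecMulVec (W t) (Φ t) + ∑ s ∈ Finset.univ.filter (fun s => s < t),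
            (Φ t ⬝ᵥ Φ s) • Matrix.vecMulVec (W s) (Φ t) := by
        rw [hrow t]
        ext i j
        simp [Matrix.vecMulVec_apply, Matrix.sum_apply, Matrix.smul_apply, smul_eq_mul,
          Finset.sum_mul, add_mul, mul_assoc]
      have hfe : (Finset.univ.filter (fun s : Fin N => s < t)) =
          (Finset.univ.filter (fun s : Fin N => (s : ℕ) < n)) := by
        ext s; simp [Fin.lt_def, ht]
      rw [Finset.sum_congr rfl (fun s _ => hterm s), hVt, hfe, Finset.sum_sub_distrib]
      have hcomm : ∀ s : Fin N, Φ t ⬝ᵥ Φ s = Φ s ⬝ᵥ Φ t := fun s => dotProduct_comm _ _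
      simp only [hcomm]
      abel
  -- conclude
  rw [Matrix.mul_assoc, ← hW]
  funext t j
  rw [congrFun (hO t) j, Matrix.mul_apply,
    ← Finset.sum_filter_add_sum_filter_not Finset.univ (fun s : Fin N => s ≤ t)]
  have hz : ∑ s ∈ Finset.univ.filter (fun s : Fin N => ¬ s ≤ t),
      (Matrix.of fun i j : Fin N => if j ≤ i then (Ψ * Φᵀ) i j else 0) t s * W s j = 0 := by
    apply Finset.sum_eq_zero
    intro s hs
    simp only [Finset.mem_filter, Finset.mem_univ, true_and] at hs
    simp [Matrix.of_apply, hs]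
  rw [hz, add_zero, hSn ((t : ℕ) + 1) t.isLt]
  have hfe2 : (Finset.univ.filter (fun s : Fin N => (s : ℕ) < (t : ℕ) + 1)) =
      (Finset.univ.filter (fun s : Fin N => s ≤ t)) := by
    ext s
    simp only [Finset.mem_filter, Finset.mem_univ, true_and, Fin.le_def]
    omega
  simp only [Matrix.mulVec, dotProduct]
  simp only [Matrix.sum_apply, Matrix.vecMulVec_apply, Finset.sum_mul]
  rw [Finset.sum_comm, hfe2]
  apply Finset.sum_congr rfl
  intro s hs
  simp only [Finset.mem_filter, Finset.mem_univ, true_and] at hs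
  rw [Matrix.of_apply, if_pos hs, Matrix.mul_apply, Finset.sum_mul]
  apply Finset.sum_congr rfl
  intro x _
  simp [Matrix.transpose_apply]
  ring
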